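/- A finite sequence of distinct integers has no strictly increasing subsequence of length t if and only if it can be decomposed (partitioned) into t−1 strictly decreasing subsequences. -/

import Mathlib

def lisLen (b : List ℤ) : ℕ → ℕ := fun i =>
  1 + ((Finset.range i).attach.sup fun j =>
    if b.getD j.1 0 < b.getD i 0 then lisLen b j.1 else 0)
termination_by i => i
decreasing_by exact Finset.mem_range.mp j.2

lemma lisLen_pos (b : List ℤ) (i : ℕ) : 1 ≤ lisLen b i := by
  rw [lisLen]; exact Nat.le_add_right 1 _

lemma lisLen_lt (b : List ℤ) {j i : ℕ} (hji : j < i)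
    (hv : b.getD j 0 < b.getD i 0) : lisLen b j < lisLen b i := by
  conv_rhs => rw [lisLen]
  have hmem : (⟨j, Finset.mem_range.mpr hji⟩ : {x // x ∈ Finset.range i}) ∈
      (Finset.range i).attach := Finset.mem_attach _ _
  have := Finset.le_sup (f := fun j : {x // x ∈ Finset.range i} =>
    if b.getD j.1 0 < b.getD i 0 then lisLen b j.1 else 0) hmem
  simp only [hv, if_pos] at this
  omega

lemma lisLen_exists (b : List ℤ) : ∀ i, i < b.length →
    ∃ s : List ℤ, s.Sublist (b.take (i+1)) ∧ s.Chain' (· < ·) ∧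
      s.length = lisLen b i ∧ s.getLast? = some (b.getD i 0) := by
  intro i
  induction i using Nat.strong_induction_on with
  | _ i IH =>
    intro hi
    have htake : b.take (i+1) = b.take i ++ [b.getD i 0] := by
      rw [List.take_succ]
      congr 1
      rw [List.getD_eq_getElem b 0 hi]
      simp [List.getElem?_eq_getElem hi]
    set g : {x // x ∈ Finset.range i} → ℕ := fun j =>
      if b.getD j.1 0 < b.getD i 0 then lisLen b j.1 else 0 with hg
    have hlis : lisLen b i = 1 + (Finset.range i).attach.sup g := by rw [lisLen]
    rcases Nat.eq_zero_or_pos ((Finset.range i).attach.sup g) with h0 | hpos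
    · refine ⟨[b.getD i 0], ?_, List.isChain_singleton _, by simp [hlis, h0], by simp⟩
      rw [htake]
      exact (List.nil_sublist _).append (List.Sublist.refl _)
    · have hne : ((Finset.range i).attach).Nonempty := by
        by_contra h
        rw [Finset.not_nonempty_iff_eq_empty.mp h] at hpos
        simp at hpos
      obtain ⟨j, -, hj⟩ := Finset.exists_mem_eq_sup _ hne g
      have hgj : g j ≠ 0 := by omega
      have hcond : b.getD j.1 0 < b.getD i 0 := by
        by_contra h
        exact hgj (by simp only [hg]; rw [if_neg h])
      have hji : j.1 < i := Finset.mem_range.mp j.2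
      obtain ⟨s, hsub, hch, hlen, hlast⟩ := IH j.1 hji (hji.trans hi)
      refine ⟨s ++ [b.getD i 0], ?_, ?_, ?_, List.getLast?_concat⟩
      · rw [htake]
        refine List.Sublist.append ?_ (List.Sublist.refl _)
        have : b.take (j.1+1) = (b.take i).take (j.1+1) := by
          rw [List.take_take, Nat.min_eq_left hji]
        exact hsub.trans (this ▸ List.take_sublist _ _)
      · simp only [List.Chain']; rw [List.isChain_append]
        refine ⟨hch, List.isChain_singleton _, ?_⟩
        intro x hx y hy
        rw [hlast, Option.mem_some_iff] at hx
        simp only [List.head?_cons, Option.mem_some_iff] at hy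
        subst hx; subst hy; exact hcond
      · have hgj2 : g j = lisLen b j.1 := by simp only [hg]; rw [if_pos hcond]
        rw [List.length_append, List.length_cons, List.length_nil, hlen, hlis, hj, hgj2]
        omega

/-- A finite sequence of distinct integers has no strictly increasing
subsequence of length `t` iff its index set can be partitioned into `t − 1`
classes each of which indexes a strictly decreasing subsequence. -/
theorem no_inc_iff_decomp_into_decreasing (t : ℕ) (ht : 1 ≤ t)
    (b : List ℤ) (hb : b.Nodup) :
    (¬ ∃ s : List ℤ, s.Sublist b ∧ s.Chain' (· < ·) ∧ s.length = t) ↔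
    ∃ f : Fin b.length → Fin (t - 1),
      ∀ i j : Fin b.length, i < j → f i = f j → b.get j < b.get i := by
  constructor
  · intro hno
    have hbound : ∀ i : Fin b.length, lisLen b i.1 ≤ t - 1 := by
      intro i
      by_contra h
      push_neg at h
      obtain ⟨s, hsub, hch, hlen, -⟩ := lisLen_exists b i.1 i.2
      apply hno
      refine ⟨s.take t, (s.take_sublist t).trans (hsub.trans (List.take_sublist _ _)),
        hch.sublist (s.take_sublist t), ?_⟩
      rw [List.length_take, hlen]
      omega
    refine ⟨fun i => ⟨lisLen b i.1 - 1,
      lt_of_lt_of_le (Nat.sub_lt (lisLen_pos b i.1) one_pos) (hbound i)⟩, ?_⟩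
    intro i j hij hf
    have h1 := lisLen_pos b i.1
    have h2 := lisLen_pos b j.1
    have heq : lisLen b i.1 = lisLen b j.1 := by
      have := congrArg Fin.val hf
      simp only at this
      omega
    have hne : b.get i ≠ b.get j := fun h => (Fin.ne_of_lt hij) (hb.get_inj_iff.mp h)
    rcases lt_or_gt_of_ne hne with hlt | hgt
    · have := lisLen_lt b (show i.1 < j.1 from hij)
        (by rw [List.getD_eq_getElem b 0 i.2, List.getD_eq_getElem b 0 j.2]
            simpa using hlt)
      omega
    · exact hgt
  · rintro ⟨f, hf⟩ ⟨s, hsub, hch, hlen⟩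
    obtain ⟨is, hs_eq, hs_pw⟩ := List.sublist_eq_map_getElem hsub
    have hislen : is.length = t := by
      rw [hs_eq, List.length_map] at hlen; exact hlen
    have hpw : s.Pairwise (· < ·) := List.isChain_iff_pairwise.mp hch
    rw [hs_eq, List.pairwise_map] at hpw
    set F : Fin is.length → Fin (t - 1) := fun k => f (is.get k) with hF
    obtain ⟨x, y, hxy, hFxy⟩ := Fintype.exists_ne_map_eq_of_card_lt F
      (by simp [hislen]; omega)
    have key : ∀ x y : Fin is.length, x < y → F x = F y → False := by
      intro x y hlt hFeq
      have hidx : is.get x < is.get y := List.pairwise_iff_get.mp hs_pw x y hlt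
      have h1 : b.get (is.get x) < b.get (is.get y) :=
        List.pairwise_iff_get.mp hpw x y hlt
      have h2 : b.get (is.get y) < b.get (is.get x) := hf _ _ hidx hFeq
      exact absurd h1 (not_lt.mpr h2.le)
    rcases lt_or_gt_of_ne hxy with h | h
    · exact key x y h hFxy
    · exact key y x h hFxy.symm
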